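/- Let M be a nonzero R-module with only finitely many small submodules and Rad(M) ≠ 0. Then M has a submodule that is simultaneously a minimal (simple) submodule and a small submodule of M; in particular Soc(Rad(M)) ≠ 0. -/

import Mathlib

/-- A submodule `N` of `M` is small (superfluous): `N + A = M` implies `A = M`. -/
def IsSmallSubmodule {R M : Type*} [Ring R] [AddCommGroup M] [Module R M]
    (N : Submodule R M) : Prop :=
  ∀ A : Submodule R M, N ⊔ A = ⊤ → A = ⊤

/-- `M` is an fs-module: it has only finitely many small submodules. -/
def IsFsModule (R M : Type*) [Ring R] [AddCommGroup M] [Module R M] : Prop :=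
  {N : Submodule R M | IsSmallSubmodule N}.Finite

/-- The radical of `M`, as the sum of all small submodules of `M`. -/
def modRad (R M : Type*) [Ring R] [AddCommGroup M] [Module R M] : Submodule R M :=
  sSup {N : Submodule R M | IsSmallSubmodule N}

/-- The radical of `M`, as the intersection of all maximal submodules of `M`. -/
def modRad' (R M : Type*) [Ring R] [AddCommGroup M] [Module R M] : Submodule R M :=
  sInf {N : Submodule R M | IsCoatom N}

/-- The socle of `M`: the sum of all minimal (simple) submodules of `M`. -/
def modSoc (R M : Type*) [Ring R] [AddCommGroup M] [Module R M] : Submodule R M :=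
  sSup {N : Submodule R M | IsAtom N}

/-- `M` has finite hollow dimension: for every descending chain `N₁ ⊇ N₂ ⊇ ⋯`
there is `n` such that `Nₙ / N_k` is small in `M / N_k` for all `k ≥ n`. -/
def HasFiniteHollowDim (R M : Type*) [Ring R] [AddCommGroup M] [Module R M] : Prop :=
  ∀ N : ℕ → Submodule R M, (∀ i j, i ≤ j → N j ≤ N i) →
    ∃ n, ∀ k, n ≤ k → IsSmallSubmodule (Submodule.map (N k).mkQ (N n))

/-- `M` has finite Goldie dimension: it contains no infinite direct sum of
nonzero submodules. -/
def HasFiniteGoldieDim (R M : Type*) [Ring R] [AddCommGroup M] [Module R M] : Prop :=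
  ¬ ∃ f : ℕ → Submodule R M, (∀ i, f i ≠ ⊥) ∧ iSupIndep f

theorem exists_minimal_small_of_fs (R M : Type*) [Ring R] [AddCommGroup M] [Module R M]
    [Nontrivial M] (hfs : IsFsModule R M) (hrad : modRad R M ≠ ⊥) :
    ∃ S : Submodule R M, IsAtom S ∧ IsSmallSubmodule S ∧ S ≤ modRad R M := by
  -- there is a nonzero small submodule
  have hne : ∃ N : Submodule R M, IsSmallSubmodule N ∧ N ≠ ⊥ := by
    by_contra h
    push_neg at h
    apply hrad
    rw [modRad, eq_bot_iff]
    exact sSup_le fun N hN => by rw [h N hN]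
  set s : Set (Submodule R M) := {N | IsSmallSubmodule N ∧ N ≠ ⊥} with hs
  have hsfin : s.Finite := hfs.subset (fun N hN => hN.1)
  obtain ⟨N0, hN0⟩ := hne
  obtain ⟨S, hSs, hmin⟩ : ∃ S ∈ s, ∀ B ∈ s, B ≤ S → S = B := by
    obtain ⟨S, hSs, hm⟩ := Set.Finite.exists_minimalFor id s hsfin ⟨N0, hN0⟩
    exact ⟨S, hSs, fun B hB h => le_antisymm (hm hB h) h⟩
  refine ⟨S, ⟨hSs.2, ?_⟩, hSs.1, le_sSup hSs.1⟩
  intro B hB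
  by_contra hBne
  have hBsmall : IsSmallSubmodule B := fun A hA =>
    hSs.1 A (top_le_iff.mp (hA ▸ sup_le_sup_right hB.le A))
  have := hmin B ⟨hBsmall, hBne⟩ hB.le
  exact hB.ne this.symm
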